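/- Let $B \subset \mathbb{R}^d$ and $f : B \to \mathbb{R}$. Then $f$ is locally convex in $B$ (i.e., $f(tx+(1-t)y) \le t f(x) + (1-t) f(y)$ whenever $x, y \in B$, $t \in [0,1]$, and the segment $L_{x,y} \subset B$) if and only if the epigraph $\mathrm{epi}(f) = \{(x,\mu) \in B \times \mathbb{R} : \mu \ge f(x)\}$ is relatively convex in $B \times \mathbb{R}$. -/
import Mathlib


theorem stmt_2 (d : ℕ) (B : Set (EuclideanSpace ℝ (Fin d)))
    (f : EuclideanSpace ℝ (Fin d) → ℝ) :
    (∀ x ∈ B, ∀ y ∈ B, segment ℝ x y ⊆ B → ∀ t ∈ Set.Icc (0:ℝ) 1,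
        f (t • x + (1 - t) • y) ≤ t * f x + (1 - t) * f y) ↔
      (∀ p ∈ {q : EuclideanSpace ℝ (Fin d) × ℝ | q.1 ∈ B ∧ f q.1 ≤ q.2},
        ∀ p' ∈ {q : EuclideanSpace ℝ (Fin d) × ℝ | q.1 ∈ B ∧ f q.1 ≤ q.2},
        segment ℝ p p' ⊆ B ×ˢ (Set.univ : Set ℝ) →
        segment ℝ p p' ⊆ {q : EuclideanSpace ℝ (Fin d) × ℝ | q.1 ∈ B ∧ f q.1 ≤ q.2}) := by
  constructor
  · rintro h ⟨x, μ⟩ ⟨hx, hμ⟩ ⟨y, ν⟩ ⟨hy, hν⟩ hseg z ⟨a, b, ha, hb, hab, rfl⟩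
    have hsegxy : segment ℝ x y ⊆ B := by
      rintro w ⟨a', b', ha', hb', hab', rfl⟩
      have := hseg ⟨a', b', ha', hb', hab', rfl⟩
      exact this.1
    have hb' : b = 1 - a := by linarith
    subst hb'
    refine ⟨hsegxy ⟨a, 1 - a, ha, hb, hab, rfl⟩, ?_⟩
    have hle := h x hx y hy hsegxy a ⟨ha, by linarith⟩
    show f (a • x + (1 - a) • y) ≤ a * μ + (1 - a) * ν
    calc f (a • x + (1 - a) • y) ≤ a * f x + (1 - a) * f y := hle
      _ ≤ a * μ + (1 - a) * ν := by nlinarith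
  · rintro h x hx y hy hseg t ⟨ht0, ht1⟩
    have hp : ((x, f x) : _ × ℝ) ∈ {q : EuclideanSpace ℝ (Fin d) × ℝ | q.1 ∈ B ∧ f q.1 ≤ q.2} :=
      ⟨hx, le_refl _⟩
    have hp' : ((y, f y) : _ × ℝ) ∈ {q : EuclideanSpace ℝ (Fin d) × ℝ | q.1 ∈ B ∧ f q.1 ≤ q.2} :=
      ⟨hy, le_refl _⟩
    have hss : segment ℝ ((x, f x) : _ × ℝ) (y, f y) ⊆ B ×ˢ (Set.univ : Set ℝ) := by
      rintro z ⟨a, b, ha, hb, hab, rfl⟩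
      exact ⟨hseg ⟨a, b, ha, hb, hab, rfl⟩, trivial⟩
    have := h _ hp _ hp' hss ⟨t, 1 - t, ht0, by linarith, by ring, rfl⟩
    simpa using this.2
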